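/- Suppose Y = Y¹ almost surely on the event {A = 1}, A and Y¹ are conditionally independent given σ(L), positivity holds (π₀(L) ≥ δ > 0 almost surely), and Y¹ is integrable. Let V = v(L) for a measurable map v : 𝓛 → 𝒱, and let g : 𝒱 → ℝ be bounded measurable and γ : 𝒱 → ℝ measurable with γ(V) integrable. Then the inverse-probability-weighted observed-data estimating function has the same mean as the full-data estimating function: E[ (A/π₀(L)) · g(V) · (Y − γ(V)) ] = E[ g(V) · (Y¹ − γ(V)) ]. In particular, if the full-data estimating function g(V)(Y¹ − γ(V)) has mean zero, so does its inverse-probability-weighted observed-data counterpart. -/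

import Mathlib

open MeasureTheory ProbabilityTheory

lemma aux_indepFun_ae {Ω : Type*} {m' : MeasurableSpace Ω}
    [mΩ : MeasurableSpace Ω] [StandardBorelSpace Ω] [Nonempty Ω] (hm' : m' ≤ mΩ)
    (P : Measure Ω) [IsProbabilityMeasure P]
    {A Y1 : Ω → ℝ} (hA : Measurable A) (hY1 : Measurable Y1)
    (hindep : CondIndepFun m' hm' A Y1 P) :
    ∀ᵐ ω ∂P, IndepFun A Y1 (condExpKernel P m' ω) := by
  set κ := condExpKernel P m' with hκ
  have hsets : ∀ᵐ ω ∂P, ∀ q r : ℚ,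
      κ ω (A ⁻¹' Set.Iio (q:ℝ) ∩ Y1 ⁻¹' Set.Iio (r:ℝ))
        = κ ω (A ⁻¹' Set.Iio (q:ℝ)) * κ ω (Y1 ⁻¹' Set.Iio (r:ℝ)) := by
    rw [ae_all_iff]
    intro q
    rw [ae_all_iff]
    intro r
    refine ae_of_ae_trim hm' ?_
    exact hindep _ _ ⟨Set.Iio (q:ℝ), measurableSet_Iio, rfl⟩
      ⟨Set.Iio (r:ℝ), measurableSet_Iio, rfl⟩
  filter_upwards [hsets] with ω hω
  set p1 : Set (Set Ω) := (fun s => A ⁻¹' s) '' (⋃ a : ℚ, {Set.Iio (a:ℝ)}) with hp1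
  set p2 : Set (Set Ω) := (fun s => Y1 ⁻¹' s) '' (⋃ a : ℚ, {Set.Iio (a:ℝ)}) with hp2
  have hmem1 : ∀ s, s ∈ p1 ↔ ∃ q : ℚ, s = A ⁻¹' Set.Iio (q:ℝ) := by
    intro s
    simp only [hp1, Set.mem_image, Set.mem_iUnion, Set.mem_singleton_iff]
    constructor
    · rintro ⟨x, ⟨y, rfl⟩, rfl⟩; exact ⟨y, rfl⟩
    · rintro ⟨q, rfl⟩; exact ⟨_, ⟨q, rfl⟩, rfl⟩
  have hmem2 : ∀ s, s ∈ p2 ↔ ∃ q : ℚ, s = Y1 ⁻¹' Set.Iio (q:ℝ) := by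
    intro s
    simp only [hp2, Set.mem_image, Set.mem_iUnion, Set.mem_singleton_iff]
    constructor
    · rintro ⟨x, ⟨y, rfl⟩, rfl⟩; exact ⟨y, rfl⟩
    · rintro ⟨q, rfl⟩; exact ⟨_, ⟨q, rfl⟩, rfl⟩
  have hpi : ∀ (f : Ω → ℝ), IsPiSystem ((fun s => f ⁻¹' s) '' (⋃ a : ℚ, {Set.Iio (a:ℝ)})) := by
    intro f s hs t ht _
    simp only [Set.mem_image, Set.mem_iUnion, Set.mem_singleton_iff] at hs ht ⊢
    obtain ⟨s', ⟨q, rfl⟩, rfl⟩ := hs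
    obtain ⟨t', ⟨r, rfl⟩, rfl⟩ := ht
    refine ⟨Set.Iio ((min q r : ℚ) : ℝ), ⟨min q r, rfl⟩, ?_⟩
    rw [← Set.preimage_inter, Set.Iio_inter_Iio]
    push_cast
    rfl
  have hgen : ∀ (f : Ω → ℝ), MeasurableSpace.comap f (inferInstance : MeasurableSpace ℝ)
      = MeasurableSpace.generateFrom ((fun s => f ⁻¹' s) '' (⋃ a : ℚ, {Set.Iio (a:ℝ)})) := by
    intro f
    conv_lhs => rw [show (inferInstance : MeasurableSpace ℝ) = borel ℝ from rfl,
      Real.borel_eq_generateFrom_Iio_rat, MeasurableSpace.comap_generateFrom]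
  have hindsets : IndepSets p1 p2 (κ ω) := by
    intro t1 t2 h1 h2
    obtain ⟨q, rfl⟩ := (hmem1 t1).1 h1
    obtain ⟨r, rfl⟩ := (hmem2 t2).1 h2
    exact Filter.Eventually.of_forall fun _ => hω q r
  have : Indep (MeasurableSpace.comap A inferInstance)
      (MeasurableSpace.comap Y1 inferInstance) (κ ω) :=
    IndepSets.indep hA.comap_le hY1.comap_le (hpi A) (hpi Y1) (hgen A) (hgen Y1) hindsets
  exact this

lemma condexp_mul_of_condIndepFun' {Ω : Type*} {m' : MeasurableSpace Ω}
    [mΩ : MeasurableSpace Ω] [StandardBorelSpace Ω] [Nonempty Ω] (hm' : m' ≤ mΩ)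
    (P : Measure Ω) [IsProbabilityMeasure P]
    {A Y1 : Ω → ℝ} (hA : Measurable A) (hY1 : Measurable Y1)
    (hAbdd : ∀ ω, |A ω| ≤ 1) (hY1int : Integrable Y1 P)
    (hindep : CondIndepFun m' hm' A Y1 P) :
    P[fun ω => A ω * Y1 ω|m'] =ᵐ[P] fun ω => (P[A|m']) ω * (P[Y1|m']) ω := by
  have hnorm : ∀ᵐ ω ∂P, ‖A ω‖ ≤ 1 :=
    Filter.Eventually.of_forall fun ω => by simpa [Real.norm_eq_abs] using hAbdd ω
  have hAY1int : Integrable (fun ω => A ω * Y1 ω) P :=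
    hY1int.bdd_mul hA.aestronglyMeasurable hnorm
  have hAint : Integrable A P := by
    have := (integrable_const (1:ℝ)).bdd_mul (μ := P) hA.aestronglyMeasurable hnorm
    simpa using this
  have h1 := condExp_ae_eq_integral_condExpKernel hm' hAY1int
  have h2 := condExp_ae_eq_integral_condExpKernel hm' hAint
  have h3 := condExp_ae_eq_integral_condExpKernel hm' hY1int
  have hind := aux_indepFun_ae hm' P hA hY1 hindep
  filter_upwards [h1, h2, h3, hind] with ω e1 e2 e3 hiω
  rw [e1, e2, e3]
  exact IndepFun.integral_fun_mul_eq_mul_integral hiω hA.aestronglyMeasurable hY1.aestronglyMeasurable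

theorem ipw_aux
    {Ω 𝓛 𝒱 : Type*} {m' : MeasurableSpace Ω}
    [MeasurableSpace Ω] [StandardBorelSpace Ω] [Nonempty Ω]
    [MeasurableSpace 𝓛] [MeasurableSpace 𝒱]
    (hm' : m' ≤ (inferInstance : MeasurableSpace Ω))
    (P : Measure Ω) [IsProbabilityMeasure P]
    (L : Ω → 𝓛) (A Y Y1 : Ω → ℝ)
    (hL : Measurable L) (hA : Measurable A) (hY : Measurable Y) (hY1 : Measurable Y1)
    (hLm : Measurable[m'] L)
    (hA01 : ∀ ω, A ω = 0 ∨ A ω = 1)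
    (hcons : ∀ᵐ ω ∂P, A ω = 1 → Y ω = Y1 ω)
    (hindep : CondIndepFun m' hm' A Y1 P)
    (π₀ : 𝓛 → ℝ) (hπ₀ : Measurable π₀) (hπ₀01 : ∀ l, 0 ≤ π₀ l ∧ π₀ l ≤ 1)
    (hps : P[(fun ω => if A ω = 1 then (1 : ℝ) else 0) | m'] =ᵐ[P] fun ω => π₀ (L ω))
    (δ : ℝ) (hδ : 0 < δ) (hpos : ∀ᵐ ω ∂P, δ ≤ π₀ (L ω))
    (hY1int : Integrable Y1 P)
    (v : 𝓛 → 𝒱) (hv : Measurable v)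
    (g : 𝒱 → ℝ) (hg : Measurable g) (hgbdd : ∃ C, ∀ x, |g x| ≤ C)
    (γ : 𝒱 → ℝ) (hγ : Measurable γ) (hγint : Integrable (fun ω => γ (v (L ω))) P) :
    (∫ ω, (A ω / π₀ (L ω)) * g (v (L ω)) * (Y ω - γ (v (L ω))) ∂P
        = ∫ ω, g (v (L ω)) * (Y1 ω - γ (v (L ω))) ∂P)
    ∧ ((∫ ω, g (v (L ω)) * (Y1 ω - γ (v (L ω))) ∂P = 0) →
        ∫ ω, (A ω / π₀ (L ω)) * g (v (L ω)) * (Y ω - γ (v (L ω))) ∂P = 0) := by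
  obtain ⟨C, hC⟩ := hgbdd
  have hC0 : 0 ≤ C := le_trans (abs_nonneg _) (hC (v (L (Classical.arbitrary Ω))))
  -- functions
  set GV : Ω → ℝ := fun ω => g (v (L ω)) with hGVdef
  set ΓV : Ω → ℝ := fun ω => γ (v (L ω)) with hΓVdef
  set πL : Ω → ℝ := fun ω => π₀ (L ω) with hπLdef
  set W : Ω → ℝ := fun ω => GV ω / πL ω with hWdef
  set Z : Ω → ℝ := fun ω => Y1 ω - ΓV ω with hZdef
  -- measurability
  have hGVm : Measurable[m'] GV := (hg.comp hv).comp hLm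
  have hΓVm : Measurable[m'] ΓV := (hγ.comp hv).comp hLm
  have hπLm : Measurable[m'] πL := hπ₀.comp hLm
  have hWm : Measurable[m'] W := hGVm.div hπLm
  have hGVM : Measurable GV := (hg.comp hv).comp hL
  have hΓVM : Measurable ΓV := (hγ.comp hv).comp hL
  have hWM : Measurable W := hGVM.div (hπ₀.comp hL)
  -- bounds
  have hAabs : ∀ ω, |A ω| ≤ 1 := fun ω => by rcases hA01 ω with h | h <;> simp [h]
  have hAnorm : ∀ᵐ ω ∂P, ‖A ω‖ ≤ 1 :=
    Filter.Eventually.of_forall fun ω => by simpa [Real.norm_eq_abs] using hAabs ω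
  have hGVnorm : ∀ᵐ ω ∂P, ‖GV ω‖ ≤ C :=
    Filter.Eventually.of_forall fun ω => by simpa [Real.norm_eq_abs] using hC (v (L ω))
  have hWnorm : ∀ᵐ ω ∂P, ‖W ω‖ ≤ C / δ := by
    filter_upwards [hpos] with ω hω
    have hπpos : 0 < πL ω := lt_of_lt_of_le hδ hω
    rw [Real.norm_eq_abs, hWdef, abs_div, abs_of_pos hπpos]
    exact div_le_div₀ hC0 (hC (v (L ω))) hδ hω
  -- integrability
  have hZint : Integrable Z P := hY1int.sub hγint
  have hAZint : Integrable (fun ω => A ω * Z ω) P := hZint.bdd_mul hA.aestronglyMeasurable hAnorm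
  have hWAZint : Integrable (fun ω => W ω * (A ω * Z ω)) P :=
    hAZint.bdd_mul hWM.aestronglyMeasurable hWnorm
  have hAY1int : Integrable (fun ω => A ω * Y1 ω) P :=
    hY1int.bdd_mul hA.aestronglyMeasurable hAnorm
  have hAint : Integrable A P := by
    have := (integrable_const (1:ℝ)).bdd_mul (μ := P) hA.aestronglyMeasurable hAnorm
    simpa using this
  have hΓAint : Integrable (fun ω => ΓV ω * A ω) P := by
    have := hγint.bdd_mul hA.aestronglyMeasurable hAnorm
    exact this.congr (Filter.Eventually.of_forall fun ω => mul_comm _ _)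
  have hGVY1int : Integrable (fun ω => GV ω * Y1 ω) P :=
    hY1int.bdd_mul hGVM.aestronglyMeasurable hGVnorm
  have hGVΓint : Integrable (fun ω => GV ω * ΓV ω) P :=
    hγint.bdd_mul hGVM.aestronglyMeasurable hGVnorm
  have hGVEint : Integrable (fun ω => GV ω * (P[Y1|m']) ω) P :=
    integrable_condExp.bdd_mul hGVM.aestronglyMeasurable hGVnorm
  -- conditional expectation computations
  have hcondA : P[A|m'] =ᵐ[P] πL := by
    have hif : (fun ω => if A ω = 1 then (1 : ℝ) else 0) = A := by
      funext ω; rcases hA01 ω with h | h <;> simp [h]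
    rw [← hif]
    exact hps
  have hprod : P[fun ω => A ω * Y1 ω|m'] =ᵐ[P] fun ω => πL ω * (P[Y1|m']) ω := by
    have h := condexp_mul_of_condIndepFun' hm' P hA hY1 hAabs hY1int hindep
    filter_upwards [h, hcondA] with ω h1 h2
    rw [h1, h2]
  have hΓA : P[fun ω => ΓV ω * A ω|m'] =ᵐ[P] fun ω => ΓV ω * πL ω := by
    have h := condExp_mul_of_stronglyMeasurable_left hΓVm.stronglyMeasurable
      hΓAint hAint
    have h' : P[fun ω => ΓV ω * A ω|m'] =ᵐ[P] fun ω => ΓV ω * (P[A|m']) ω := by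
      exact h
    filter_upwards [h', hcondA] with ω h1 h2
    rw [h1, h2]
  have hAZ : P[fun ω => A ω * Z ω|m'] =ᵐ[P] fun ω => πL ω * ((P[Y1|m']) ω - ΓV ω) := by
    have heq : (fun ω => A ω * Z ω) = fun ω => A ω * Y1 ω - ΓV ω * A ω := by
      funext ω; simp only [hZdef]; ring
    have heq2 : (fun ω => A ω * Y1 ω - ΓV ω * A ω)
        = (fun ω => A ω * Y1 ω) - fun ω => ΓV ω * A ω := rfl
    rw [heq, heq2]
    have hsub := condExp_sub (m := m') hAY1int hΓAint
    filter_upwards [hsub, hprod, hΓA] with ω h1 h2 h3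
    rw [h1, Pi.sub_apply, h2, h3]
    ring
  have hWAZ : P[fun ω => W ω * (A ω * Z ω)|m']
      =ᵐ[P] fun ω => GV ω * ((P[Y1|m']) ω - ΓV ω) := by
    have h := condExp_mul_of_stronglyMeasurable_left hWm.stronglyMeasurable
      hWAZint hAZint
    have h' : P[fun ω => W ω * (A ω * Z ω)|m']
        =ᵐ[P] fun ω => W ω * (P[fun ω => A ω * Z ω|m']) ω := by
      exact h
    filter_upwards [h', hAZ, hpos] with ω h1 h2 h3
    rw [h1, h2]
    have hπpos : πL ω ≠ 0 := ne_of_gt (lt_of_lt_of_le hδ h3)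
    rw [hWdef]
    field_simp
  have hGVY1 : P[fun ω => GV ω * Y1 ω|m'] =ᵐ[P] fun ω => GV ω * (P[Y1|m']) ω := by
    have h := condExp_mul_of_stronglyMeasurable_left hGVm.stronglyMeasurable
      hGVY1int hY1int
    exact h
  -- the integral computation
  have key : ∫ ω, (A ω / π₀ (L ω)) * g (v (L ω)) * (Y ω - γ (v (L ω))) ∂P
      = ∫ ω, g (v (L ω)) * (Y1 ω - γ (v (L ω))) ∂P := by
    have step1 : ∫ ω, (A ω / π₀ (L ω)) * g (v (L ω)) * (Y ω - γ (v (L ω))) ∂P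
        = ∫ ω, W ω * (A ω * Z ω) ∂P := by
      refine integral_congr_ae ?_
      filter_upwards [hcons] with ω h1
      rcases hA01 ω with h | h
      · simp [h, hWdef, hZdef]
      · rw [h1 h, h]
        simp only [hWdef, hZdef, hGVdef, hΓVdef, hπLdef]
        ring
    have step2 : ∫ ω, W ω * (A ω * Z ω) ∂P
        = ∫ ω, GV ω * ((P[Y1|m']) ω - ΓV ω) ∂P := by
      rw [← integral_condExp hm']
      exact integral_congr_ae hWAZ
    have step3 : ∫ ω, GV ω * ((P[Y1|m']) ω - ΓV ω) ∂P
        = ∫ ω, GV ω * (P[Y1|m']) ω ∂P - ∫ ω, GV ω * ΓV ω ∂P := by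
      have : (fun ω => GV ω * ((P[Y1|m']) ω - ΓV ω))
          = fun ω => GV ω * (P[Y1|m']) ω - GV ω * ΓV ω := by
        funext ω; ring
      rw [this, integral_sub hGVEint hGVΓint]
    have step4 : ∫ ω, GV ω * (P[Y1|m']) ω ∂P = ∫ ω, GV ω * Y1 ω ∂P := by
      rw [← integral_congr_ae hGVY1, integral_condExp hm']
    have step5 : ∫ ω, GV ω * Y1 ω ∂P - ∫ ω, GV ω * ΓV ω ∂P
        = ∫ ω, g (v (L ω)) * (Y1 ω - γ (v (L ω))) ∂P := by
      rw [← integral_sub hGVY1int hGVΓint]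
      refine integral_congr_ae (Filter.Eventually.of_forall fun ω => ?_)
      simp only [hGVdef, hΓVdef]
      ring
    rw [step1, step2, step3, step4, step5]
  exact ⟨key, fun h => key.trans h⟩


/-- Mapping a full-data estimating function to an observed-data,
inverse-probability-weighted estimating function: under `Y = Y¹` a.s. on `{A = 1}`,
conditional ignorability and positivity,
`E[(A/π₀(L))·g(V)·(Y − γ(V))] = E[g(V)·(Y¹ − γ(V))]` for `V = v(L)`; in particular the
observed-data estimating function has mean zero whenever the full-data one does. -/
theorem ipw_full_data_estimating_function
    {Ω 𝓛 𝒱 : Type*} [MeasurableSpace Ω] [StandardBorelSpace Ω] [Nonempty Ω]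
    [MeasurableSpace 𝓛] [MeasurableSpace 𝒱]
    (P : Measure Ω) [IsProbabilityMeasure P]
    (L : Ω → 𝓛) (A Y Y1 : Ω → ℝ)
    (hL : Measurable L) (hA : Measurable A) (hY : Measurable Y) (hY1 : Measurable Y1)
    (hA01 : ∀ ω, A ω = 0 ∨ A ω = 1)
    -- Y = Y¹ a.s. on the event {A = 1}
    (hcons : ∀ᵐ ω ∂P, A ω = 1 → Y ω = Y1 ω)
    -- A and Y¹ are conditionally independent given σ(L)
    (hindep : CondIndepFun (MeasurableSpace.comap L inferInstance) hL.comap_le A Y1 P)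
    -- π₀(L) is a version of P(A = 1 ∣ σ(L))
    (π₀ : 𝓛 → ℝ) (hπ₀ : Measurable π₀) (hπ₀01 : ∀ l, 0 ≤ π₀ l ∧ π₀ l ≤ 1)
    (hps : P[(fun ω => if A ω = 1 then (1 : ℝ) else 0) |
        MeasurableSpace.comap L inferInstance] =ᵐ[P] fun ω => π₀ (L ω))
    -- positivity: π₀(L) ≥ δ > 0 a.s.
    (δ : ℝ) (hδ : 0 < δ) (hpos : ∀ᵐ ω ∂P, δ ≤ π₀ (L ω))
    -- Y¹ is integrable
    (hY1int : Integrable Y1 P)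
    -- V = v(L) for measurable v, g bounded measurable, γ measurable with γ(V) integrable
    (v : 𝓛 → 𝒱) (hv : Measurable v)
    (g : 𝒱 → ℝ) (hg : Measurable g) (hgbdd : ∃ C, ∀ x, |g x| ≤ C)
    (γ : 𝒱 → ℝ) (hγ : Measurable γ) (hγint : Integrable (fun ω => γ (v (L ω))) P) :
    (∫ ω, (A ω / π₀ (L ω)) * g (v (L ω)) * (Y ω - γ (v (L ω))) ∂P
        = ∫ ω, g (v (L ω)) * (Y1 ω - γ (v (L ω))) ∂P)
    ∧ ((∫ ω, g (v (L ω)) * (Y1 ω - γ (v (L ω))) ∂P = 0) →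
        ∫ ω, (A ω / π₀ (L ω)) * g (v (L ω)) * (Y ω - γ (v (L ω))) ∂P = 0) := by
  exact ipw_aux hL.comap_le P L A Y Y1 hL hA hY hY1 (fun s hs => ⟨s, hs, rfl⟩) hA01 hcons hindep
    π₀ hπ₀ hπ₀01 hps δ hδ hpos hY1int v hv g hg hgbdd γ hγ hγint
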